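/- Let K ⊆ X be a closed convex cone with nonempty interior and M : X → Y a linear map. If Ker(M) ∩ int(K) ≠ ∅, then M(K) = Im(M); in particular M(K) is a closed subspace of Y. -/
import Mathlib


theorem stmt1 {X Y : Type*} [NormedAddCommGroup X] [InnerProductSpace ℝ X]
    [FiniteDimensional ℝ X] [NormedAddCommGroup Y] [InnerProductSpace ℝ Y]
    [FiniteDimensional ℝ Y] (M : X →ₗ[ℝ] Y) (K : Set X)
    (hKclosed : IsClosed K) (hKconv : Convex ℝ K)
    (hKcone : ∀ x ∈ K, ∀ t : ℝ, 0 ≤ t → t • x ∈ K)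
    (hint : (interior K).Nonempty)
    (hker : ((LinearMap.ker M : Set X) ∩ interior K).Nonempty) :
    M '' K = (LinearMap.range M : Set Y) ∧ IsClosed (M '' K) := by
  obtain ⟨e, heker, heint⟩ := hker
  have heK : M e = 0 := heker
  obtain ⟨ε, hε, hball⟩ := Metric.isOpen_iff.mp isOpen_interior e heint
  have key : M '' K = (LinearMap.range M : Set Y) := by
    apply Set.Subset.antisymm
    · rintro _ ⟨x, -, rfl⟩; exact ⟨x, rfl⟩
    · rintro _ ⟨x, rfl⟩
      set t : ℝ := ‖x‖ / ε + 1 with ht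
      have hεpos : (0:ℝ) < ε := hε
      have htpos : 0 < t := by positivity
      have hmem : e + t⁻¹ • x ∈ K := by
        apply interior_subset
        apply hball
        rw [Metric.mem_ball, dist_eq_norm]
        rw [add_sub_cancel_left, norm_smul, norm_inv, Real.norm_of_nonneg htpos.le]
        rw [inv_mul_lt_iff₀ htpos]
        have : ‖x‖ / ε < t := by
          rw [ht]; linarith
        calc ‖x‖ = (‖x‖ / ε) * ε := by field_simp
          _ < t * ε := by nlinarith
      have hK2 : t • (e + t⁻¹ • x) ∈ K := hKcone _ hmem t htpos.le
      have heq : t • (e + t⁻¹ • x) = x + t • e := by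
        rw [smul_add, smul_smul, mul_inv_cancel₀ htpos.ne', one_smul]
        abel
      rw [heq] at hK2
      refine ⟨x + t • e, hK2, ?_⟩
      simp [map_add, map_smul, heK]
  refine ⟨key, ?_⟩
  rw [key]
  exact (LinearMap.range M).closed_of_finiteDimensional
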